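/- arXiv:1602.00421 — 2 statements merged into one kernel-verified Lean document; each statement's English description precedes it below -/
import Mathlib

section
/- Let R be a Noetherian ring of prime characteristic p with finite F-representation type by modules M_1, …, M_s. Then every localization S⁻¹R of R has finite F-representation type, witnessed by the localized modules S⁻¹M_1, …, S⁻¹M_s. -/
/-- `R` has finite `F`-representation type witnessed by the modules `M i`. -/
def HasFiniteFRepType (R : Type) [CommRing R] (p : ℕ) [ExpChar R p]
    (s : ℕ) (M : Fin s → Type) [∀ i, AddCommGroup (M i)] [∀ i, Module R (M i)] : Prop :=
  ∀ e : ℕ, ∃ n : Fin s → ℕ, Nonempty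
    (((ModuleCat.restrictScalars (iterateFrobenius R p e)).obj (ModuleCat.of R R)) ≃ₗ[R]
      DirectSum (Fin s) fun i => Fin (n i) → M i)

open Finset in
/-- A finite product of localized modules is a localized module. -/
theorem isLocalizedModule_pi {R : Type*} [CommRing R] (S : Submonoid R)
    {ι : Type*} [Fintype ι] [DecidableEq ι] {M N : ι → Type*}
    [∀ i, AddCommGroup (M i)] [∀ i, Module R (M i)]
    [∀ i, AddCommGroup (N i)] [∀ i, Module R (N i)]
    (f : ∀ i, M i →ₗ[R] N i) [∀ i, IsLocalizedModule S (f i)] :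
    IsLocalizedModule S (LinearMap.pi (fun i => (f i).comp (LinearMap.proj i)) :
      (∀ i, M i) →ₗ[R] (∀ i, N i)) where
  map_units t := by
    rw [Module.End.isUnit_iff]
    constructor
    · intro x y hxy
      funext i
      apply ((Module.End.isUnit_iff _).mp (IsLocalizedModule.map_units (f i) t)).injective
      simpa only [Module.algebraMap_end_apply, Pi.smul_apply] using congrFun hxy i
    · intro y
      choose x hx using fun i =>
        ((Module.End.isUnit_iff _).mp (IsLocalizedModule.map_units (f i) t)).surjective (y i)
      exact ⟨x, funext fun i => by
        simpa only [Module.algebraMap_end_apply, Pi.smul_apply] using hx i⟩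
  surj y := by
    choose x hx using fun i => IsLocalizedModule.surj S (f i) (y i)
    set t : ι → S := fun i => (x i).2 with ht
    refine ⟨⟨fun i => (∏ j ∈ univ.erase i, (t j : R)) • (x i).1, ∏ j, t j⟩,
      funext fun i => ?_⟩
    simp only [LinearMap.pi_apply, LinearMap.comp_apply, LinearMap.proj_apply, map_smul]
    have h1 : ((∏ j, t j : S) : R) = (∏ j ∈ univ.erase i, (t j : R)) * (t i : R) := by
      push_cast
      rw [Finset.prod_erase_mul _ _ (mem_univ i)]
    calc (∏ j, t j) • y i = ((∏ j, t j : S) : R) • y i := by rw [Submonoid.smul_def]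
      _ = (∏ j ∈ univ.erase i, (t j : R)) • ((t i : R) • y i) := by rw [h1, mul_smul]
      _ = (∏ j ∈ univ.erase i, (t j : R)) • f i (x i).1 := by
          rw [← Submonoid.smul_def]; exact congrArg _ (hx i)
  exists_of_eq {x₁ x₂} h := by
    choose c hc using fun i =>
      IsLocalizedModule.exists_of_eq (S := S) (f := f i) (congrFun h i)
    refine ⟨∏ j, c j, funext fun i => ?_⟩
    have h1 : ((∏ j, c j : S) : R) = (∏ j ∈ univ.erase i, (c j : R)) * (c i : R) := by
      push_cast
      rw [Finset.prod_erase_mul _ _ (mem_univ i)]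
    have key : ∀ z : M i, (∏ j, c j) • z =
        (∏ j ∈ univ.erase i, (c j : R)) • ((c i : R) • z) := fun z => by
      rw [Submonoid.smul_def, h1, mul_smul]
    show (∏ j, c j) • x₁ i = (∏ j, c j) • x₂ i
    rw [key, key, ← Submonoid.smul_def, ← Submonoid.smul_def]
    exact congrArg _ (hc i)

/-- If a Noetherian ring `R` of prime characteristic `p` has finite
`F`-representation type witnessed by `M_1, …, M_s`, then any localization `S⁻¹R` has finite
`F`-representation type witnessed by the localized modules `S⁻¹M_1, …, S⁻¹M_s`. -/
theorem stmt9 (R : Type) [CommRing R] [IsNoetherianRing R] (p : ℕ) [Fact p.Prime] [CharP R p]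
    (s : ℕ) (M : Fin s → Type) [∀ i, AddCommGroup (M i)] [∀ i, Module R (M i)]
    [∀ i, Module.Finite R (M i)] (hffrt : HasFiniteFRepType R p s M)
    (S : Submonoid R) [CharP (Localization S) p] :
    HasFiniteFRepType (Localization S) p s (fun i => LocalizedModule S (M i)) := by
  intro e
  obtain ⟨n, ⟨φ⟩⟩ := hffrt e
  refine ⟨n, ?_⟩
  -- the inner maps `Fin (n i) → M i  →  Fin (n i) → LocalizedModule S (M i)`
  set inner : ∀ i, (Fin (n i) → M i) →ₗ[R] (Fin (n i) → LocalizedModule S (M i)) :=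
    fun i => LinearMap.pi
      (fun j => (LocalizedModule.mkLinearMap S (M i)).comp (LinearMap.proj j)) with hinner
  haveI hInner : ∀ i, IsLocalizedModule S (inner i) := fun i =>
    isLocalizedModule_pi S _
  -- the middle map between pi types
  set mid : (∀ i, Fin (n i) → M i) →ₗ[R] (∀ i, Fin (n i) → LocalizedModule S (M i)) :=
    LinearMap.pi (fun i => (inner i).comp (LinearMap.proj i)) with hmid
  haveI hMid : IsLocalizedModule S mid := isLocalizedModule_pi S inner
  -- transport along the direct-sum/pi equivalences and `φ`
  set eN : DirectSum (Fin s) (fun i => Fin (n i) → M i) ≃ₗ[R] (∀ i, Fin (n i) → M i) :=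
    DirectSum.linearEquivFunOnFintype R (Fin s) (fun i => Fin (n i) → M i) with heN
  set eT : (∀ i, Fin (n i) → LocalizedModule S (M i)) ≃ₗ[R]
      DirectSum (Fin s) (fun i => Fin (n i) → LocalizedModule S (M i)) :=
    (DirectSum.linearEquivFunOnFintype R (Fin s)
      (fun i => Fin (n i) → LocalizedModule S (M i))).symm with heT
  set X : ModuleCat R :=
    (ModuleCat.restrictScalars (iterateFrobenius R p e)).obj (ModuleCat.of R R) with hX
  set Y : ModuleCat (Localization S) :=
    (ModuleCat.restrictScalars (iterateFrobenius (Localization S) p e)).obj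
      (ModuleCat.of (Localization S) (Localization S)) with hY
  letI : Module R Y := Module.compHom Y (algebraMap R (Localization S))
  haveI : IsScalarTower R (Localization S) Y := ⟨fun r a y => by
    change iterateFrobenius (Localization S) p e (r • a) * (@id (Localization S) y) =
      iterateFrobenius (Localization S) p e (algebraMap R (Localization S) r) *
        (iterateFrobenius (Localization S) p e a * (@id (Localization S) y))
    rw [Algebra.smul_def, map_mul, mul_assoc]⟩
  obtain ⟨k, hk⟩ : ∃ k, p ^ e = k + 1 :=
    ⟨p ^ e - 1, by have := pow_pos (Fact.out : p.Prime).pos e; omega⟩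
  let g : X →ₗ[R] Y :=
    { toFun := fun x => algebraMap R (Localization S) (x : R)
      map_add' := fun x y => map_add (algebraMap R (Localization S)) (x : R) (y : R)
      map_smul' := fun r x => by
        change algebraMap R (Localization S) (iterateFrobenius R p e r * (@id R x)) =
          iterateFrobenius (Localization S) p e (algebraMap R (Localization S) r) *
            algebraMap R (Localization S) (x : R)
        simp only [iterateFrobenius_def, map_mul, map_pow]
        rfl }
  haveI hg : IsLocalizedModule S g :=
    { map_units := fun t => by
        rw [Module.End.isUnit_iff]
        have hu : IsUnit (iterateFrobenius (Localization S) p e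
            (algebraMap R (Localization S) (t : R))) :=
          (IsLocalization.map_units (Localization S) t).map _
        constructor
        · intro x y hxy
          rw [Module.algebraMap_end_apply, Module.algebraMap_end_apply] at hxy
          change iterateFrobenius (Localization S) p e (algebraMap R (Localization S) (t : R)) *
              (@id (Localization S) x) =
            iterateFrobenius (Localization S) p e (algebraMap R (Localization S) (t : R)) *
              (@id (Localization S) y) at hxy
          exact hu.mul_left_cancel hxy
        · intro y
          refine ⟨((hu.unit⁻¹ : (Localization S)ˣ) : Localization S) * (@id (Localization S) y), ?_⟩
          change iterateFrobenius (Localization S) p e (algebraMap R (Localization S) (t : R)) *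
              (((hu.unit⁻¹ : (Localization S)ˣ) : Localization S) * (@id (Localization S) y)) =
            (@id (Localization S) y)
          rw [← mul_assoc, hu.mul_val_inv, one_mul]
      surj := fun y => by
        obtain ⟨⟨a, t⟩, h⟩ := IsLocalization.surj S (@id (Localization S) y)
        refine ⟨⟨(a * (t : R) ^ k : R), t⟩, ?_⟩
        change iterateFrobenius (Localization S) p e (algebraMap R (Localization S) (t : R)) *
            (@id (Localization S) y) = algebraMap R (Localization S) (a * (t : R) ^ k)
        have h' : @id (Localization S) y * algebraMap R (Localization S) (t : R) =
            algebraMap R (Localization S) a := h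
        rw [iterateFrobenius_def, map_mul, map_pow, ← h', hk]
        ring
      exists_of_eq := fun {x₁ x₂} h => by
        have h' : algebraMap R (Localization S) (x₁ : R) =
            algebraMap R (Localization S) (x₂ : R) := h
        obtain ⟨c, hc⟩ := (IsLocalization.eq_iff_exists S (Localization S)).mp h'
        refine ⟨c, ?_⟩
        change iterateFrobenius R p e (c : R) * (@id R x₁) = iterateFrobenius R p e (c : R) * (@id R x₂)
        rw [iterateFrobenius_def, hk, pow_succ, mul_assoc, mul_assoc]
        exact congrArg (fun z => (c : R) ^ k * z) hc }
  set φ' : X ≃ₗ[R] DirectSum (Fin s) (fun i => Fin (n i) → M i) := φ with hφ'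
  set F : X →ₗ[R] DirectSum (Fin s) (fun i => Fin (n i) → LocalizedModule S (M i)) :=
    eT.toLinearMap ∘ₗ ((mid ∘ₗ (eN.toLinearMap ∘ₗ φ'.toLinearMap))) with hF
  haveI hF1 : IsLocalizedModule S (mid ∘ₗ (eN.toLinearMap ∘ₗ φ'.toLinearMap)) := by
    have : eN.toLinearMap ∘ₗ φ'.toLinearMap = (φ'.trans eN).toLinearMap := rfl
    rw [this]
    exact IsLocalizedModule.of_linearEquiv_right S mid (φ'.trans eN)
  haveI hF2 : IsLocalizedModule S F :=
    IsLocalizedModule.of_linearEquiv S _ eT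
  -- the `R`-linear equivalence between the two localizations
  set e0 : Y ≃ₗ[R]
      DirectSum (Fin s) (fun i => Fin (n i) → LocalizedModule S (M i)) :=
    IsLocalizedModule.linearEquiv S g F with he0
  -- upgrade to `Localization S`-linearity
  refine ⟨{ e0.toLinearMap.extendScalarsOfIsLocalization S (Localization S) with
    invFun := e0.symm
    left_inv := e0.left_inv
    right_inv := e0.right_inv }⟩
end

section
/- Let R be a Noetherian local normal domain of dimension ≥ 3 satisfying: every reflexive ideal of R has depth ≥ 3 (condition (D3)). Let x, y be elements of R forming part of a system of parameters, and n ≥ 1. Then the maximal ideal of R is not an associated prime of R/(x^n, y^n). -/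
/-- The depth of a module over a Noetherian local ring: the supremum of lengths of
regular sequences on `M` consisting of elements of the maximal ideal. -/
noncomputable def moduleDepth (R : Type) [CommRing R] [IsLocalRing R]
    (M : Type) [AddCommGroup M] [Module R M] : ℕ∞ :=
  sSup {n : ℕ∞ | ∃ rs : List R, (rs.length : ℕ∞) = n ∧
    (∀ r ∈ rs, r ∈ IsLocalRing.maximalIdeal R) ∧ RingTheory.Sequence.IsRegular M rs}



section AssFinite

variable {R : Type*} [CommRing R] {M : Type*} [AddCommGroup M] [Module R M]

lemma isAP_iff [IsNoetherianRing R] {p : Ideal R} :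
    IsAssociatedPrime p M ↔ p.IsPrime ∧ ∃ x : M, p = (Submodule.span R {x}).annihilator := by
  rw [isAssociatedPrime_iff]
  have h : ∀ x : M, (Submodule.colon (⊥ : Submodule R M) {x}) =
      (Submodule.span R {x}).annihilator := by
    intro x; ext r
    rw [Submodule.mem_colon_singleton, Submodule.mem_bot, Submodule.mem_annihilator_span_singleton]
  simp only [h]

lemma ass_subset_union [IsNoetherianRing R] (K : Submodule R M) :
    associatedPrimes R M ⊆ associatedPrimes R K ∪ associatedPrimes R (M ⧸ K) := by
  intro p hpa
  obtain ⟨hp, x, hx⟩ := isAP_iff.mp (AssociatedPrimes.mem_iff.mp hpa)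
  by_cases h : ∀ r : R, r • x ∈ K → r • x = 0
  · right
    refine AssociatedPrimes.mem_iff.mpr (isAP_iff.mpr ⟨hp, Submodule.Quotient.mk x, ?_⟩)
    ext r
    rw [Submodule.mem_annihilator_span_singleton, ← Submodule.Quotient.mk_smul,
      Submodule.Quotient.mk_eq_zero]
    constructor
    · intro hr
      have : r • x = 0 := by
        rw [hx, Submodule.mem_annihilator_span_singleton] at hr; exact hr
      rw [this]; exact K.zero_mem
    · intro hr
      rw [hx, Submodule.mem_annihilator_span_singleton]
      exact h r hr
  · push_neg at h
    obtain ⟨r, hrK, hr0⟩ := h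
    left
    have hrp : r ∉ p := by
      intro hrp
      rw [hx, Submodule.mem_annihilator_span_singleton] at hrp
      exact hr0 hrp
    refine AssociatedPrimes.mem_iff.mpr (isAP_iff.mpr ⟨hp, ⟨r • x, hrK⟩, ?_⟩)
    ext s
    rw [Submodule.mem_annihilator_span_singleton]
    have : (s • (⟨r • x, hrK⟩ : K) = 0) ↔ s • (r • x) = 0 := by
      constructor
      · intro h; exact congrArg Subtype.val h
      · intro h; exact Subtype.ext h
    rw [this, smul_smul]
    constructor
    · intro hs
      have hsx : s • x = 0 := by
        rw [hx, Submodule.mem_annihilator_span_singleton] at hs; exact hs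
      rw [mul_comm, mul_smul, hsx, smul_zero]
    · intro hs
      have hmem : s * r ∈ p := by
        rw [hx, Submodule.mem_annihilator_span_singleton]; exact hs
      exact (hp.mem_or_mem hmem).resolve_right hrp

lemma ass_span_singleton_subset [IsNoetherianRing R] {x : M} (hp : ((Submodule.span R {x}).annihilator).IsPrime) :
    associatedPrimes R (Submodule.span R {x}) ⊆ {(Submodule.span R {x}).annihilator} := by
  intro p hpa
  obtain ⟨hpp, y, hy⟩ := isAP_iff.mp (AssociatedPrimes.mem_iff.mp hpa)
  obtain ⟨r, hr⟩ := Submodule.mem_span_singleton.mp y.2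
  have hyval : (y : M) = r • x := hr.symm
  have hy0 : (y : M) ≠ 0 := by
    intro h0
    have : y = 0 := Subtype.ext h0
    rw [this] at hy
    apply hpp.ne_top
    rw [hy, eq_top_iff]
    intro s _
    rw [Submodule.mem_annihilator_span_singleton, smul_zero]
  have hrq : r ∉ (Submodule.span R {x}).annihilator := by
    rw [Submodule.mem_annihilator_span_singleton]
    rw [hyval] at hy0; exact hy0
  have key : ∀ s : R, s ∈ p ↔ s * r ∈ (Submodule.span R {x}).annihilator := by
    intro s
    rw [hy, Submodule.mem_annihilator_span_singleton,
      Submodule.mem_annihilator_span_singleton]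
    constructor
    · intro h
      have h1 : s • (y : M) = 0 := congrArg Subtype.val h
      rw [hyval, smul_smul] at h1
      exact h1
    · intro h
      apply Subtype.ext
      show s • (y : M) = 0
      rw [hyval, smul_smul]
      exact h
  simp only [Set.mem_singleton_iff]
  ext s
  rw [key s]
  constructor
  · intro h
    exact (hp.mem_or_mem h).resolve_right hrq
  · intro h
    exact Ideal.mul_mem_right r _ h

theorem assFinite [IsNoetherianRing R] [IsNoetherian R M] :
    (associatedPrimes R M).Finite := by
  have main : ∀ N : Submodule R M, (associatedPrimes R (M ⧸ N)).Finite := by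
    intro N
    induction N using IsNoetherian.induction with
    | _ N ih =>
      by_cases htop : N = ⊤
      · subst htop
        have : Subsingleton (M ⧸ (⊤ : Submodule R M)) := Submodule.Quotient.subsingleton_iff.mpr rfl
        rw [associatedPrimes.eq_empty_of_subsingleton]
        exact Set.finite_empty
      · have : Nontrivial (M ⧸ N) := Submodule.Quotient.nontrivial_iff.mpr htop
        obtain ⟨q, hqa⟩ := associatedPrimes.nonempty R (M ⧸ N)
        obtain ⟨hq, xbar, hxq⟩ := isAP_iff.mp (AssociatedPrimes.mem_iff.mp hqa)
        obtain ⟨x, rfl⟩ := Submodule.Quotient.mk_surjective N xbar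
        have hxN : x ∉ N := by
          intro hx
          apply hq.ne_top
          rw [hxq, eq_top_iff]
          intro s _
          rw [Submodule.mem_annihilator_span_singleton, ← Submodule.Quotient.mk_smul,
            Submodule.Quotient.mk_eq_zero]
          exact N.smul_mem s hx
        set N' := N ⊔ Submodule.span R {x} with hN'
        have hlt : N < N' := by
          rw [hN', lt_iff_le_and_ne]
          refine ⟨le_sup_left, ?_⟩
          intro h
          apply hxN
          rw [h]
          exact (le_sup_right : Submodule.span R {x} ≤ N ⊔ Submodule.span R {x}) (Submodule.mem_span_singleton_self x)
        have hfin' := ih N' hlt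
        -- K is the image of N' in M/N, which equals span of xbar
        have hmap : Submodule.map N.mkQ N' = Submodule.span R {Submodule.Quotient.mk x} := by
          have h1 : Submodule.map N.mkQ N = ⊥ := by
            apply le_bot_iff.mp
            rw [Submodule.map_le_iff_le_comap, Submodule.comap_bot, Submodule.ker_mkQ]
          rw [hN', Submodule.map_sup, h1, bot_sup_eq, Submodule.map_span,
            Set.image_singleton]
          rfl
        have hsub := ass_subset_union (M := M ⧸ N) (Submodule.map N.mkQ N')
        have e2 := LinearEquiv.AssociatedPrimes.eq (Submodule.quotientQuotientEquivQuotient N N' le_sup_left)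
        have hKq : associatedPrimes R (Submodule.map N.mkQ N') ⊆ {q} := by
          rw [hmap]
          have hq' : ((Submodule.span R {(Submodule.Quotient.mk x : M ⧸ N)}).annihilator).IsPrime := by
            rw [← hxq]; exact hq
          have := ass_span_singleton_subset hq'
          rw [← hxq] at this
          exact this
        apply Set.Finite.subset (Set.Finite.union (Set.finite_singleton q) (ih N' hlt))
        intro p hps
        rcases hsub hps with h | h
        · exact Or.inl (hKq h)
        · right; rwa [e2] at h
  have e : (M ⧸ (⊥ : Submodule R M)) ≃ₗ[R] M := Submodule.quotEquivOfEqBot ⊥ rfl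
  have := main ⊥
  rwa [LinearEquiv.AssociatedPrimes.eq e] at this
end AssFinite


section Reflexive

variable {R : Type*} [CommRing R] [IsDomain R]

theorem colon_reflexive {a : R} (b : R) (ha : a ≠ 0) :
    Module.IsReflexive R ((Ideal.span {a}).colon (Ideal.span {b})) := by
  set J : Ideal R := (Ideal.span {a}).colon (Ideal.span {b}) with hJ
  have haJ : a ∈ J := by
    rw [hJ, Ideal.mem_colon_span_singleton]
    exact Ideal.mem_span_singleton'.mpr ⟨b, mul_comm b a⟩
  have hmem : ∀ j : J, ∃ s : R, s * a = (j : R) * b := fun j =>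
    Ideal.mem_span_singleton'.mp (Ideal.mem_colon_span_singleton.mp j.2)
  choose sfun hsfun using hmem
  have hcoe_smul : ∀ (c : R) (j : J), ((c • j : J) : R) = c * (j : R) := fun c j => rfl
  have hcoe_add : ∀ (j j' : J), ((j + j' : J) : R) = (j : R) + (j' : R) := fun j j' => rfl
  let μ : J →ₗ[R] R :=
    { toFun := sfun
      map_add' := by
        intro j j'
        apply mul_right_cancel₀ ha
        rw [add_mul, hsfun, hsfun, hsfun, hcoe_add, add_mul]
      map_smul' := by
        intro c j
        apply mul_right_cancel₀ ha
        rw [RingHom.id_apply, smul_eq_mul, mul_assoc, hsfun, hsfun, hcoe_smul, mul_assoc] }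
  have key : ∀ (φ : Module.Dual R J) (s r : J), (s : R) * φ r = (r : R) * φ s := by
    intro φ s r
    have h1 : (s : R) • r = (r : R) • s := Subtype.ext (mul_comm (s : R) (r : R))
    have h2 : φ ((s : R) • r) = (s : R) * φ r := by rw [map_smul, smul_eq_mul]
    have h3 : φ ((r : R) • s) = (r : R) * φ s := by rw [map_smul, smul_eq_mul]
    rw [← h2, ← h3, h1]
  set aJ : J := ⟨a, haJ⟩ with haJdef
  have hμa : μ aJ = b := by
    apply mul_right_cancel₀ ha
    have := hsfun aJ
    show sfun aJ * a = b * a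
    rw [this]
    show (a : R) * b = b * a
    exact mul_comm a b
  constructor
  constructor
  · -- injective
    intro j j' h
    have h2 := congrArg (fun F : Module.Dual R (Module.Dual R J) => F J.subtype) h
    simp only [Module.Dual.eval_apply] at h2
    exact Subtype.ext h2
  · -- surjective
    intro F
    set t : R := F J.subtype with ht
    have hFφ : ∀ φ : Module.Dual R J, a * F φ = φ aJ * t := by
      intro φ
      have h1 : a • φ = φ aJ • J.subtype := by
        ext r
        show a • φ r = φ aJ * (r : R)
        rw [smul_eq_mul]
        have := key φ aJ r
        show a * φ r = φ aJ * (r : R)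
        calc a * φ r = (r : R) * φ aJ := this
          _ = φ aJ * (r : R) := mul_comm _ _
      calc a * F φ = a • F φ := by rw [smul_eq_mul]
        _ = F (a • φ) := (map_smul F a φ).symm
        _ = F (φ aJ • J.subtype) := by rw [h1]
        _ = φ aJ • F J.subtype := map_smul F _ _
        _ = φ aJ * t := by rw [smul_eq_mul, ht]
    have htJ : t ∈ J := by
      rw [hJ, Ideal.mem_colon_span_singleton]
      refine Ideal.mem_span_singleton'.mpr ⟨F μ, ?_⟩
      have := hFφ μ
      rw [hμa] at this
      calc F μ * a = a * F μ := mul_comm _ _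
        _ = b * t := this
        _ = t * b := mul_comm _ _
    refine ⟨⟨t, htJ⟩, ?_⟩
    ext φ
    show φ ⟨t, htJ⟩ = F φ
    apply mul_left_cancel₀ ha
    have h2 := key φ aJ ⟨t, htJ⟩
    calc a * φ ⟨t, htJ⟩ = (⟨t, htJ⟩ : J) * φ aJ := h2
      _ = t * φ aJ := rfl
      _ = φ aJ * t := mul_comm _ _
      _ = a * F φ := (hFφ φ).symm

theorem top_reflexive : Module.IsReflexive R (⊤ : Ideal R) := by
  have h : (Ideal.span {(1 : R)}).colon (Ideal.span {(1 : R)}) = ⊤ := by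
    rw [eq_top_iff]
    intro r _
    rw [Ideal.mem_colon_span_singleton, Ideal.span_singleton_one]
    exact Submodule.mem_top
  have := colon_reflexive (R := R) (1 : R) one_ne_zero
  rwa [h] at this

end Reflexive

section Extract

open scoped Pointwise
open RingTheory.Sequence

lemma mem_smul_top_iff {R : Type*} [CommRing R] {M : Type*} [AddCommGroup M] [Module R M]
    (r : R) (x : M) : x ∈ r • (⊤ : Submodule R M) ↔ ∃ m : M, x = r • m := by
  constructor
  · intro hx
    rw [← SetLike.mem_coe, Submodule.coe_pointwise_smul] at hx
    obtain ⟨m, -, rfl⟩ := hx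
    exact ⟨m, rfl⟩
  · rintro ⟨m, rfl⟩
    exact Submodule.smul_mem_pointwise_smul m r ⊤ trivial

variable {R : Type} [CommRing R] [IsLocalRing R]

lemma depth_three_exists_seq (M : Type) [AddCommGroup M] [Module R M]
    (h : 3 ≤ moduleDepth R M) :
    ∃ p₁ p₂ p₃ : R, p₁ ∈ IsLocalRing.maximalIdeal R ∧ p₂ ∈ IsLocalRing.maximalIdeal R ∧
      p₃ ∈ IsLocalRing.maximalIdeal R ∧ IsSMulRegular M p₁ ∧
      IsSMulRegular (QuotSMulTop p₁ M) p₂ ∧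
      IsSMulRegular (QuotSMulTop p₂ (QuotSMulTop p₁ M)) p₃ := by
  have h2 : (2 : ℕ∞) < moduleDepth R M := lt_of_lt_of_le (by norm_num) h
  rw [moduleDepth, lt_sSup_iff] at h2
  obtain ⟨n, ⟨rs, hlen, hmem, hreg⟩, hn⟩ := h2
  have hlen3 : 3 ≤ rs.length := by
    have : ((2 : ℕ) : ℕ∞) < (rs.length : ℕ∞) := by
      rw [hlen]; exact_mod_cast hn
    exact_mod_cast this
  match rs, hlen3, hmem, hreg with
  | p₁ :: p₂ :: p₃ :: rest, _, hmem, hreg =>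
    have hw := hreg.toIsWeaklyRegular
    rw [isWeaklyRegular_cons_iff] at hw
    obtain ⟨hr1, hw⟩ := hw
    rw [isWeaklyRegular_cons_iff] at hw
    obtain ⟨hr2, hw⟩ := hw
    rw [isWeaklyRegular_cons_iff] at hw
    obtain ⟨hr3, -⟩ := hw
    exact ⟨p₁, p₂, p₃, hmem _ (by simp), hmem _ (by simp), hmem _ (by simp), hr1, hr2, hr3⟩

variable {I : Ideal R}

lemma reg_elt_ne_zero [IsDomain R] {p : R} (hI : I ≠ ⊥) (hp : IsSMulRegular (↥I) p) :
    p ≠ 0 := by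
  intro h0
  subst h0
  obtain ⟨a, ha, ha0⟩ := Submodule.exists_mem_ne_zero_of_ne_bot hI
  have h1 : (0 : R) • (⟨a, ha⟩ : ↥I) = (0 : R) • (0 : ↥I) := by simp
  have h2 := hp h1
  exact ha0 (by simpa [Subtype.ext_iff] using h2)

lemma quot_reg_elementwise {p q : R}
    (hq : IsSMulRegular (QuotSMulTop p ↥I) q) :
    ∀ w ∈ I, (∃ j ∈ I, q * w = p * j) → ∃ j ∈ I, w = p * j := by
  rintro w hw ⟨j, hj, heq⟩
  set W : ↥I := ⟨w, hw⟩ with hW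
  have h1 : q • (Submodule.Quotient.mk W : QuotSMulTop p ↥I) = 0 := by
    rw [← Submodule.Quotient.mk_smul, Submodule.Quotient.mk_eq_zero,
      mem_smul_top_iff]
    exact ⟨⟨j, hj⟩, Subtype.ext heq⟩
  have h2 : q • (Submodule.Quotient.mk W : QuotSMulTop p ↥I) = q • 0 := by
    rw [h1, smul_zero]
  have h3 := hq h2
  rw [Submodule.Quotient.mk_eq_zero, mem_smul_top_iff] at h3
  obtain ⟨m, hm⟩ := h3
  exact ⟨(m : R), m.2, congrArg Subtype.val hm⟩

lemma double_quot_zero_iff {p q : R} (w : ↥I) :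
    (Submodule.Quotient.mk (Submodule.Quotient.mk w : QuotSMulTop p ↥I) :
      QuotSMulTop q (QuotSMulTop p ↥I)) = 0 ↔
    ∃ j₁ ∈ I, ∃ j₂ ∈ I, (w : R) = p * j₁ + q * j₂ := by
  rw [Submodule.Quotient.mk_eq_zero, mem_smul_top_iff]
  constructor
  · rintro ⟨η, hη⟩
    obtain ⟨V, rfl⟩ := Submodule.Quotient.mk_surjective _ η
    rw [← Submodule.Quotient.mk_smul, Submodule.Quotient.eq, mem_smul_top_iff] at hη
    obtain ⟨U, hU⟩ := hη
    have : (w : R) - q * (V : R) = p * (U : R) := congrArg Subtype.val hU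
    exact ⟨(U : R), U.2, (V : R), V.2, by linear_combination this⟩
  · rintro ⟨j₁, hj₁, j₂, hj₂, heq⟩
    refine ⟨Submodule.Quotient.mk ⟨j₂, hj₂⟩, ?_⟩
    rw [← Submodule.Quotient.mk_smul, Submodule.Quotient.eq, mem_smul_top_iff]
    refine ⟨⟨j₁, hj₁⟩, Subtype.ext ?_⟩
    show (w : R) - q * j₂ = p * j₁
    rw [heq]; ring

lemma double_quot_reg_elementwise {p q r : R}
    (hr : IsSMulRegular (QuotSMulTop q (QuotSMulTop p ↥I)) r) :
    ∀ w ∈ I, (∃ j₁ ∈ I, ∃ j₂ ∈ I, r * w = p * j₁ + q * j₂) →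
      ∃ j₁ ∈ I, ∃ j₂ ∈ I, w = p * j₁ + q * j₂ := by
  rintro w hw hex
  set W : ↥I := ⟨w, hw⟩ with hWdef
  have h1 : r • (Submodule.Quotient.mk (Submodule.Quotient.mk W : QuotSMulTop p ↥I) :
      QuotSMulTop q (QuotSMulTop p ↥I)) = 0 := by
    rw [← Submodule.Quotient.mk_smul, ← Submodule.Quotient.mk_smul]
    have : (r • W : ↥I) = ⟨r * w, I.mul_mem_left r hw⟩ := rfl
    rw [this, double_quot_zero_iff]
    exact hex
  have h0 : r • (Submodule.Quotient.mk (Submodule.Quotient.mk W : QuotSMulTop p ↥I) :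
      QuotSMulTop q (QuotSMulTop p ↥I)) = r • (0 : QuotSMulTop q (QuotSMulTop p ↥I)) := by
    rw [h1, smul_zero]
  have h2 := hr h0
  rw [double_quot_zero_iff] at h2
  exact h2

lemma not_isAssociatedPrime_of_reg [IsNoetherianRing R] {M : Type*} [AddCommGroup M] [Module R M]
    {r : R} {p : Ideal R} (hrp : r ∈ p) (hp : p ≠ ⊤) (hr : IsSMulRegular M r) :
    ¬ IsAssociatedPrime p M := by
  intro hA
  obtain ⟨hprime, x, hx⟩ := isAP_iff.mp hA
  have hx0 : x ≠ 0 := by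
    intro h0
    apply hp
    rw [hx, h0, eq_top_iff]
    intro s _
    rw [Submodule.mem_annihilator_span_singleton, smul_zero]
  have hrx : r • x = 0 := by
    have : r ∈ (Submodule.span R {x}).annihilator := hx ▸ hrp
    rwa [Submodule.mem_annihilator_span_singleton] at this
  exact hx0 (hr (show r • x = r • (0 : M) by rw [hrx, smul_zero]))

end Extract

section Main

open IsLocalRing

variable {R : Type} [CommRing R] [IsNoetherianRing R] [IsLocalRing R] [IsDomain R]

/-- Key auxiliary: if `m·w ⊆ (c)` with `c ≠ 0` then `w ∈ (c)`, given a length-2 regular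
sequence on `R` inside `m`. -/
lemma lemA {u v : R} (hu0 : u ≠ 0)
    (hvreg : ∀ s, v * s ∈ Ideal.span {u} → s ∈ Ideal.span {u})
    {c w : R} (hc : c ≠ 0) (hu : u ∈ maximalIdeal R) (hv : v ∈ maximalIdeal R)
    (h : ∀ r ∈ maximalIdeal R, r * w ∈ Ideal.span {c}) : w ∈ Ideal.span {c} := by
  obtain ⟨s, hs⟩ := Ideal.mem_span_singleton'.mp (h u hu)
  obtain ⟨t, ht⟩ := Ideal.mem_span_singleton'.mp (h v hv)
  have h1 : c * (v * s - u * t) = 0 := by linear_combination v * hs - u * ht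
  have h2 : v * s = u * t := by
    have := mul_eq_zero.mp h1
    rcases this with h | h
    · exact absurd h hc
    · linear_combination h
  obtain ⟨s', hs'⟩ := Ideal.mem_span_singleton'.mp
    (hvreg s (Ideal.mem_span_singleton'.mpr ⟨t, by linear_combination -h2⟩))
  refine Ideal.mem_span_singleton'.mpr ⟨s', ?_⟩
  have h3 : u * (s' * c - w) = 0 := by linear_combination c * hs' + hs
  rcases mul_eq_zero.mp h3 with h | h
  · exact absurd h hu0
  · linear_combination h

/-- The main step: given (D3), if `a ≠ 0` and `m·z ⊆ (a,b)` then `z ∈ (a,b)`. -/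
theorem main_step
    (hD3 : ∀ I : Ideal R, I ≠ ⊥ → Module.IsReflexive R I → 3 ≤ moduleDepth R I)
    (hbot : maximalIdeal R ≠ ⊥)
    {a b z : R} (ha : a ≠ 0)
    (hz : ∀ r ∈ maximalIdeal R, r * z ∈ Ideal.span {a, b}) :
    z ∈ Ideal.span ({a, b} : Set R) := by
  -- Lemma A setup from depth of the unit ideal
  have htopbot : (⊤ : Ideal R) ≠ ⊥ := by
    intro h
    exact one_ne_zero (by rw [← Submodule.mem_bot (R := R), ← h]; trivial : (1:R) = 0)

  obtain ⟨u₀, v₀, w₀', hu₀m, hv₀m, hw₀m, hru₀, hrv₀, -⟩ :=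
    depth_three_exists_seq (↥(⊤ : Ideal R)) (hD3 ⊤ htopbot top_reflexive)
  have hu₀0 : u₀ ≠ 0 := reg_elt_ne_zero htopbot hru₀
  have hv₀reg : ∀ s, v₀ * s ∈ Ideal.span {u₀} → s ∈ Ideal.span {u₀} := by
    intro s hs
    obtain ⟨j, hj⟩ := Ideal.mem_span_singleton'.mp hs
    obtain ⟨j', -, hj'⟩ := quot_reg_elementwise hrv₀ s trivial ⟨j, trivial, by linear_combination -hj⟩
    exact Ideal.mem_span_singleton'.mpr ⟨j', by linear_combination -hj'⟩
  have lemA' : ∀ (c w : R), c ≠ 0 → (∀ r ∈ maximalIdeal R, r * w ∈ Ideal.span {c}) →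
      w ∈ Ideal.span {c} := fun c w hc h => lemA hu₀0 hv₀reg hc hu₀m hv₀m h
  -- The colon ideal J = (a : b)
  set J : Ideal R := (Ideal.span {a}).colon (Ideal.span {b}) with hJdef
  have haJ : a ∈ J := by
    rw [hJdef, Ideal.mem_colon_span_singleton]
    exact Ideal.mem_span_singleton'.mpr ⟨b, mul_comm b a⟩
  have hJbot : J ≠ ⊥ := by
    intro h
    rw [h] at haJ
    exact ha (Submodule.mem_bot (R := R) |>.mp haJ)
  obtain ⟨p₁, p₂, p₃, hm1, hm2, hm3, hr1, hr2, hr3⟩ :=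
    depth_three_exists_seq (↥J) (hD3 J hJbot (hJdef ▸ colon_reflexive b ha))
  have hp₁0 : p₁ ≠ 0 := reg_elt_ne_zero hJbot hr1
  have J1 : ∀ w ∈ J, (∃ j ∈ J, p₂ * w = p₁ * j) → ∃ j ∈ J, w = p₁ * j :=
    quot_reg_elementwise hr2
  have S1 : ∀ t, (∀ r ∈ maximalIdeal R, r * t ∈ J) → t ∈ J := by
    intro t ht
    rw [hJdef, Ideal.mem_colon_span_singleton]
    apply lemA' a (t * b) ha
    intro r hr
    have h1 := ht r hr
    rw [hJdef, Ideal.mem_colon_span_singleton] at h1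
    have : r * (t * b) = r * t * b := by ring
    rw [this]
    exact h1
  -- choose u by prime avoidance
  have hmne : maximalIdeal R ≠ ⊤ := (maximalIdeal.isMaximal R).ne_top
  set M₁ := QuotSMulTop p₁ ↥J with hM₁
  set M₂ := QuotSMulTop p₂ M₁ with hM₂
  set SA : Set (Ideal R) := associatedPrimes R (R ⧸ J) ∪ associatedPrimes R M₁ ∪
      associatedPrimes R M₂ ∪ {⊥} with hSA
  have hSAfin : SA.Finite := by
    refine ((((assFinite (M := R ⧸ J)).union (assFinite (M := M₁))).union
      (assFinite (M := M₂))).union (Set.finite_singleton ⊥))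
  have hSAprime : ∀ p ∈ SA, Ideal.IsPrime p := by
    rintro p hp
    rcases hp with ((h | h) | h) | h
    · exact h.isPrime
    · exact h.isPrime
    · exact h.isPrime
    · rw [Set.mem_singleton_iff] at h; rw [h]; exact Ideal.bot_prime
  have hmnotSA : (maximalIdeal R : Ideal R) ∉ SA := by
    rintro (((h | h) | h) | h)
    · -- m ∈ Ass(R/J) contradicts S1
      obtain ⟨hpr, xq, hxq⟩ := isAP_iff.mp (AssociatedPrimes.mem_iff.mp h)
      obtain ⟨t, rfl⟩ := Submodule.Quotient.mk_surjective _ xq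
      have htJ : t ∈ J := by
        apply S1
        intro r hr
        have : r ∈ (Submodule.span R {(Submodule.Quotient.mk t : R ⧸ J)}).annihilator :=
          hxq ▸ hr
        rw [Submodule.mem_annihilator_span_singleton, ← Submodule.Quotient.mk_smul,
          Submodule.Quotient.mk_eq_zero] at this
        exact this
      apply hpr.ne_top
      rw [hxq, eq_top_iff]
      intro s _
      rw [Submodule.mem_annihilator_span_singleton, ← Submodule.Quotient.mk_smul]
      have : (s • t : R) ∈ J := J.smul_mem s htJ
      rw [Submodule.Quotient.mk_eq_zero]
      exact this
    · exact not_isAssociatedPrime_of_reg hm2 hmne hr2 h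
    · exact not_isAssociatedPrime_of_reg hm3 hmne hr3 h
    · rw [Set.mem_singleton_iff] at h; exact hbot h
  have havoid : ∃ u ∈ maximalIdeal R, ∀ p ∈ SA, u ∉ p := by
    by_contra hcon
    push_neg at hcon
    have hsub : (maximalIdeal R : Set R) ⊆
        ⋃ p ∈ (hSAfin.toFinset : Set (Ideal R)), ((id p : Ideal R) : Set R) := by
      intro x hx
      obtain ⟨p, hp, hxp⟩ := hcon x hx
      exact Set.mem_biUnion (show p ∈ (hSAfin.toFinset : Set (Ideal R)) by
        simpa using hSAfin.mem_toFinset.mpr hp) hxp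
    obtain ⟨p, hpT, hmp⟩ := (Ideal.subset_union_prime (f := id) (⊥ : Ideal R) (⊥ : Ideal R)
      (fun i hi _ _ => hSAprime i (hSAfin.mem_toFinset.mp hi))).mp hsub
    have hpSA := hSAfin.mem_toFinset.mp hpT
    have : p = maximalIdeal R :=
      le_antisymm (le_maximalIdeal (hSAprime p hpSA).ne_top) hmp
    exact hmnotSA (this ▸ hpSA)
  obtain ⟨u, hum, hunot⟩ := havoid
  have hu0 : u ≠ 0 := by
    intro h
    exact hunot ⊥ (by rw [hSA]; right; rfl) (by rw [h]; exact Submodule.zero_mem ⊥)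
  have hreg_of_notmem : ∀ (M : Type) [AddCommGroup M] [Module R M],
      (∀ p, IsAssociatedPrime p M → u ∉ p) → IsSMulRegular M u := by
    intro M _ _ hM
    have hbu := biUnion_associatedPrimes_eq_compl_regular R (M := M)
    by_contra hreg
    have : u ∈ ({ r : R | IsSMulRegular M r })ᶜ := hreg
    rw [← hbu] at this
    obtain ⟨S, ⟨p, rfl⟩, hS⟩ := this
    simp only [Set.mem_iUnion, SetLike.mem_coe, exists_prop] at hS
    exact hM p hS.1 hS.2
  have hU2 : ∀ t, u * t ∈ J → t ∈ J := by
    have hreg : IsSMulRegular (R ⧸ J) u := by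
      apply hreg_of_notmem
      intro p hp
      exact hunot p (by rw [hSA]; left; left; left; exact hp)
    intro t ht
    exact (isSMulRegular_quotient_iff_mem_of_smul_mem J u).mp hreg t ht
  have hregM₁ : IsSMulRegular M₁ u := by
    apply hreg_of_notmem
    intro p hp
    exact hunot p (by rw [hSA]; left; left; right; exact hp)
  have hregM₂ : IsSMulRegular M₂ u := by
    apply hreg_of_notmem
    intro p hp
    exact hunot p (by rw [hSA]; left; right; exact hp)
  have U3 : ∀ w ∈ J, (∃ j ∈ J, u * w = p₁ * j) → ∃ j ∈ J, w = p₁ * j :=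
    quot_reg_elementwise hregM₁
  have U4 : ∀ w ∈ J, (∃ j₁ ∈ J, ∃ j₂ ∈ J, u * w = p₁ * j₁ + p₂ * j₂) →
      ∃ j₁ ∈ J, ∃ j₂ ∈ J, w = p₁ * j₁ + p₂ * j₂ :=
    double_quot_reg_elementwise hregM₂
  -- Derived swaps
  have D1 : ∀ w ∈ J, (∃ j ∈ J, p₁ * w = u * j) → ∃ j ∈ J, w = u * j := by
    rintro w hw ⟨j, hj, heq⟩
    obtain ⟨j', hj', heq'⟩ := U3 j hj ⟨w, hw, by linear_combination -heq⟩
    refine ⟨j', hj', ?_⟩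
    apply mul_left_cancel₀ hp₁0
    rw [heq]
    linear_combination u * heq'
  have D2 : ∀ w ∈ J, (∃ j₁ ∈ J, ∃ j₂ ∈ J, p₂ * w = u * j₁ + p₁ * j₂) →
      ∃ c₂ ∈ J, ∃ c₁ ∈ J, w = u * c₂ + p₁ * c₁ := by
    rintro w hw ⟨j₁, hj₁, j₂, hj₂, heq⟩
    obtain ⟨e₁, he₁, e₂, he₂, heq'⟩ := U4 j₁ hj₁
      ⟨-j₂, J.neg_mem hj₂, w, hw, by linear_combination -heq⟩
    obtain ⟨c₁, hc₁, heq''⟩ := J1 (w - u * e₂) (J.sub_mem hw (J.mul_mem_left u he₂))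
      ⟨u * e₁ + j₂, J.add_mem (J.mul_mem_left u he₁) hj₂, by linear_combination heq + u * heq'⟩
    exact ⟨e₂, he₂, c₁, hc₁, by linear_combination heq''⟩
  -- Step 4 : m ∉ Ass R/(J + uR), concretely
  have step4 : ∀ ξ : R, (∀ r ∈ maximalIdeal R, ∃ j ∈ J, ∃ s : R, r * ξ = j + u * s) →
      ∃ j ∈ J, ∃ s : R, ξ = j + u * s := by
    intro ξ hξ
    obtain ⟨jp, hjp, sp, hpe⟩ := hξ p₁ hm1
    have key : ∀ r ∈ maximalIdeal R, ∀ jr sr : R, jr ∈ J → r * ξ = jr + u * sr →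
        ∃ wJ ∈ J, p₁ * jr - r * jp = u * wJ := by
      intro r hr jr sr hjr hre
      refine ⟨r * sp - p₁ * sr, ?_, by linear_combination r * hpe - p₁ * hre⟩
      apply hU2
      have : u * (r * sp - p₁ * sr) = p₁ * jr - r * jp := by
        linear_combination p₁ * hre - r * hpe
      rw [this]
      exact J.sub_mem (J.mul_mem_left p₁ hjr) (J.mul_mem_left r hjp)
    obtain ⟨jq, hjq, sq, hqe⟩ := hξ p₂ hm2
    obtain ⟨w₀, hw₀, he₀⟩ := key p₂ hm2 jq sq hjq hqe
    obtain ⟨c₂, hc₂, c₁, hc₁, hjpeq⟩ := D2 jp hjp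
      ⟨-w₀, J.neg_mem hw₀, jq, hjq, by linear_combination -he₀⟩
    refine ⟨c₁, hc₁, ?_⟩
    -- show ξ - c₁ ∈ (u)
    have hfinal : ∀ r ∈ maximalIdeal R, r * (ξ - c₁) ∈ Ideal.span {u} := by
      intro r hr
      obtain ⟨jr, hjr, sr, hre⟩ := hξ r hr
      obtain ⟨wr, hwr, hwre⟩ := key r hr jr sr hjr hre
      obtain ⟨er, her, here⟩ := D1 (jr - r * c₁)
        (J.sub_mem hjr (J.mul_mem_left r hc₁))
        ⟨wr + r * c₂, J.add_mem hwr (J.mul_mem_left r hc₂),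
          by linear_combination hwre + r * hjpeq⟩
      exact Ideal.mem_span_singleton'.mpr ⟨er + sr, by linear_combination -hre - here⟩
    have := lemA' u (ξ - c₁) hu0 hfinal
    obtain ⟨s', hs'⟩ := Ideal.mem_span_singleton'.mp this
    exact ⟨s', by linear_combination -hs'⟩
  -- Step 3 : conclude
  obtain ⟨αu, βu, hue⟩ := Ideal.mem_span_pair.mp (hz u hum)
  have hrel : ∀ r ∈ maximalIdeal R, ∀ αr βr : R, αr * a + βr * b = r * z →
      u * βr - r * βu ∈ J := by
    intro r hr αr βr hre
    rw [hJdef, Ideal.mem_colon_span_singleton]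
    exact Ideal.mem_span_singleton'.mpr ⟨r * αu - u * αr, by linear_combination r * hue - u * hre⟩
  obtain ⟨j₀, hj₀, c, hce⟩ := step4 βu (by
    intro r hr
    obtain ⟨αr, βr, hre⟩ := Ideal.mem_span_pair.mp (hz r hr)
    exact ⟨-(u * βr - r * βu), J.neg_mem (hrel r hr αr βr hre), βr, by ring⟩)
  have hfin : ∀ r ∈ maximalIdeal R, r * (z - c * b) ∈ Ideal.span {a} := by
    intro r hr
    obtain ⟨αr, βr, hre⟩ := Ideal.mem_span_pair.mp (hz r hr)
    have h1 : u * (βr - r * c) ∈ J := by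
      have : u * (βr - r * c) = (u * βr - r * βu) + r * j₀ := by linear_combination r * hce
      rw [this]
      exact J.add_mem (hrel r hr αr βr hre) (J.mul_mem_left r hj₀)
    have h2 : βr - r * c ∈ J := hU2 _ h1
    rw [hJdef, Ideal.mem_colon_span_singleton] at h2
    obtain ⟨e, he⟩ := Ideal.mem_span_singleton'.mp h2
    exact Ideal.mem_span_singleton'.mpr ⟨αr + e, by linear_combination hre + he⟩
  have hz' := lemA' a (z - c * b) ha hfin
  obtain ⟨e, he⟩ := Ideal.mem_span_singleton'.mp hz'
  refine Ideal.mem_span_pair.mpr ⟨e, c, by linear_combination he⟩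

end Main

/-- Let `R` be a Noetherian local normal domain of dimension ≥ 3 satisfying
condition (D3): every nonzero reflexive ideal has depth ≥ 3. If `x, y` are part of a system of
parameters (i.e. `dim R/(x,y) + 2 = dim R`) and `n ≥ 1`, then the maximal ideal is not an
associated prime of `R/(xⁿ, yⁿ)`. -/
theorem stmt12 (R : Type) [CommRing R] [IsNoetherianRing R] [IsLocalRing R] [IsDomain R]
    [IsIntegrallyClosed R] (hdim : 3 ≤ ringKrullDim R)
    (hD3 : ∀ I : Ideal R, I ≠ ⊥ → Module.IsReflexive R I → 3 ≤ moduleDepth R I)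
    (x y : R) (hsop : ringKrullDim (R ⧸ Ideal.span ({x, y} : Set R)) + 2 = ringKrullDim R)
    (n : ℕ) (hn : 1 ≤ n) :
    IsLocalRing.maximalIdeal R ∉
      associatedPrimes R (R ⧸ Ideal.span ({x ^ n, y ^ n} : Set R)) := by
  have hbot : IsLocalRing.maximalIdeal R ≠ ⊥ := by
    intro h
    have hf : IsField R := IsLocalRing.isField_iff_maximalIdeal_eq.mpr h
    rw [ringKrullDim_eq_zero_of_isField hf] at hdim
    norm_num at hdim
  intro hass
  obtain ⟨hp, x₀, hx₀⟩ := isAP_iff.mp (AssociatedPrimes.mem_iff.mp hass)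
  obtain ⟨z, hmk⟩ := Submodule.Quotient.mk_surjective _ x₀
  have hz : ∀ r ∈ IsLocalRing.maximalIdeal R, r * z ∈ Ideal.span ({x ^ n, y ^ n} : Set R) := by
    intro r hr
    rw [hx₀, Submodule.mem_annihilator_span_singleton, ← hmk,
      ← Submodule.Quotient.mk_smul, Submodule.Quotient.mk_eq_zero, smul_eq_mul] at hr
    exact hr
  have hznot : z ∉ Ideal.span ({x ^ n, y ^ n} : Set R) := by
    intro hzI
    apply hp.ne_top
    rw [hx₀, eq_top_iff]
    intro s _
    rw [Submodule.mem_annihilator_span_singleton, ← hmk, ← Submodule.Quotient.mk_smul,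
      Submodule.Quotient.mk_eq_zero, smul_eq_mul]
    exact Ideal.mul_mem_left _ s hzI
  by_cases hx0 : x ^ n ≠ 0
  · exact hznot (main_step hD3 hbot hx0 hz)
  · push_neg at hx0
    by_cases hy0 : y ^ n ≠ 0
    · have hcomm : ({x ^ n, y ^ n} : Set R) = {y ^ n, x ^ n} := Set.pair_comm _ _
      rw [hcomm] at hz hznot
      exact hznot (main_step hD3 hbot hy0 hz)
    · push_neg at hy0
      have hzero : Ideal.span ({x ^ n, y ^ n} : Set R) = ⊥ := by
        rw [hx0, hy0]
        have h00 : ({(0 : R), 0} : Set R) = {0} := by simp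
        rw [h00]; exact Ideal.span_singleton_eq_bot.mpr rfl
      have hz0 : z ≠ 0 := by
        intro h
        apply hznot
        rw [h]; exact Ideal.zero_mem _
      apply hbot
      rw [eq_bot_iff]
      intro r hr
      have h1 := hz r hr
      rw [hzero, Submodule.mem_bot] at h1
      rcases mul_eq_zero.mp h1 with h | h
      · rw [Submodule.mem_bot]; exact h
      · exact absurd h hz0
end
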